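/- Let f and g be orientation-preserving isometries of the Euclidean space ℝ³, i.e., affine isometric bijections of ℝ³ whose linear parts have determinant 1. If f and g have no common fixed point (the fixed point sets of f and of g are disjoint), then there exists h in the subgroup generated by f and g such that h has no fixed point in ℝ³. -/

import Mathlib

open scoped RealInnerProductSpace
open FiniteDimensional Module

section Aux

variable {E : Type*} [NormedAddCommGroup E] [InnerProductSpace ℝ E] [FiniteDimensional ℝ E]

/-- determinant of a product map -/
lemma aux_det_prodMap {M N : Type*} [AddCommGroup M] [Module ℝ M] [FiniteDimensional ℝ M]
    [AddCommGroup N] [Module ℝ N] [FiniteDimensional ℝ N]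
    (φ : M →ₗ[ℝ] M) (ψ : N →ₗ[ℝ] N) :
    LinearMap.det (φ.prodMap ψ) = LinearMap.det φ * LinearMap.det ψ := by
  classical
  let b₁ := Module.finBasis ℝ M
  let b₂ := Module.finBasis ℝ N
  rw [← LinearMap.det_toMatrix (b₁.prod b₂), LinearMap.toMatrix_prodMap,
    Matrix.det_fromBlocks_zero₂₁, LinearMap.det_toMatrix, LinearMap.det_toMatrix]

lemma aux_det_adjoint (T : E →ₗ[ℝ] E) :
    LinearMap.det (LinearMap.adjoint T) = LinearMap.det T := by
  let v := stdOrthonormalBasis ℝ E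
  rw [← LinearMap.det_toMatrix v.toBasis, LinearMap.toMatrix_adjoint v v,
    Matrix.det_conjTranspose, LinearMap.det_toMatrix, star_trivial]

lemma aux_adjoint_comp (L : E →ₗ[ℝ] E) (h : ∀ x y : E, ⟪L x, L y⟫ = ⟪x, y⟫) :
    (LinearMap.adjoint L).comp L = LinearMap.id := by
  apply LinearMap.ext; intro x
  apply ext_inner_right ℝ; intro v
  simp only [LinearMap.comp_apply, LinearMap.id_apply]
  rw [LinearMap.adjoint_inner_left, h]

lemma aux_range_eq_orthogonal_ker_adjoint (T : E →ₗ[ℝ] E) :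
    LinearMap.range T = (LinearMap.ker (LinearMap.adjoint T))ᗮ := by
  have h1 : (LinearMap.range T)ᗮ = LinearMap.ker (LinearMap.adjoint T) := by
    ext x
    rw [Submodule.mem_orthogonal, LinearMap.mem_ker]
    constructor
    · intro hx
      apply ext_inner_right ℝ; intro v
      rw [LinearMap.adjoint_inner_left, inner_zero_left, real_inner_comm]
      exact hx (T v) (LinearMap.mem_range_self T v)
    · rintro hx u ⟨v, rfl⟩
      rw [real_inner_comm, ← LinearMap.adjoint_inner_left, hx, inner_zero_left]
  rw [← h1, Submodule.orthogonal_orthogonal]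

end Aux

section Aux3

local notation "E3" => EuclideanSpace ℝ (Fin 3)

variable (L : E3 →ₗ[ℝ] E3)

lemma aux_fixed_iff_adjoint_fixed (h : ∀ x y : E3, ⟪L x, L y⟫ = ⟪x, y⟫)
    (hsurj : Function.Surjective L) (x : E3) :
    L x = x ↔ (LinearMap.adjoint L) x = x := by
  have hadj := aux_adjoint_comp L h
  constructor
  · intro hx
    conv_lhs => rw [← hx]
    have := LinearMap.congr_fun hadj x
    simpa [hx] using this
  · intro hx
    obtain ⟨y, rfl⟩ := hsurj x
    have h1 := LinearMap.congr_fun hadj y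
    simp only [LinearMap.comp_apply, LinearMap.id_apply] at h1
    rw [h1] at hx
    exact (congrArg L hx).symm

lemma aux_det_sub_one_eq_zero (hdet : LinearMap.det L = 1)
    (h : ∀ x y : E3, ⟪L x, L y⟫ = ⟪x, y⟫) :
    LinearMap.det (L - LinearMap.id) = 0 := by
  have hadj := aux_adjoint_comp L h
  have h1 : (LinearMap.adjoint L).comp (L - LinearMap.id)
      = - (LinearMap.adjoint L - LinearMap.id) := by
    rw [LinearMap.comp_sub, hadj, LinearMap.comp_id]
    abel
  have h2 := congrArg LinearMap.det h1
  rw [LinearMap.det_comp, aux_det_adjoint, hdet, one_mul] at h2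
  have h3 : LinearMap.det (-(LinearMap.adjoint L - LinearMap.id))
      = - LinearMap.det (LinearMap.adjoint L - LinearMap.id) := by
    rw [← neg_one_smul ℝ (LinearMap.adjoint L - LinearMap.id), LinearMap.det_smul,
      finrank_euclideanSpace_fin]
    ring
  have h4 : LinearMap.adjoint L - LinearMap.id = LinearMap.adjoint (L - LinearMap.id) := by
    rw [map_sub]
    congr 1
    rw [← Module.End.one_eq_id, ← LinearMap.star_eq_adjoint, star_one]
  rw [h3, h4, aux_det_adjoint] at h2
  linarith

end Aux3

section Aux2

variable {E : Type*} [NormedAddCommGroup E] [InnerProductSpace ℝ E] [FiniteDimensional ℝ E]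

lemma aux_det_split (K : Submodule ℝ E) (L : E →ₗ[ℝ] E)
    (h1 : ∀ x ∈ K, L x ∈ K) (h2 : ∀ x ∈ Kᗮ, L x ∈ Kᗮ) :
    LinearMap.det L = LinearMap.det (L.restrict h1) * LinearMap.det (L.restrict h2) := by
  have hc : IsCompl K Kᗮ := Submodule.isCompl_orthogonal_of_hasOrthogonalProjection
  set e := Submodule.prodEquivOfIsCompl K Kᗮ hc with he
  set F := (L.restrict h1).prodMap (L.restrict h2) with hF
  have key : (e : K × Kᗮ →ₗ[ℝ] E) ∘ₗ F ∘ₗ (e.symm : E →ₗ[ℝ] K × Kᗮ) = L := by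
    apply LinearMap.ext; intro x
    obtain ⟨p, rfl⟩ := e.surjective x
    simp only [LinearMap.comp_apply, LinearEquiv.coe_coe, LinearEquiv.symm_apply_apply]
    show ((F p).1 : E) + ((F p).2 : E) = L ((p.1 : E) + (p.2 : E))
    have e1 : ((F p).1 : E) = L p.1 := rfl
    have e2 : ((F p).2 : E) = L p.2 := rfl
    rw [e1, e2, ← map_add]
  calc LinearMap.det L = LinearMap.det ((e : K × Kᗮ →ₗ[ℝ] E) ∘ₗ F ∘ₗ (e.symm : E →ₗ[ℝ] K × Kᗮ)) :=
        by rw [key]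
    _ = LinearMap.det F := LinearMap.det_conj F e
    _ = _ := aux_det_prodMap _ _

lemma aux_restrict_eq_id (K : Submodule ℝ E) (L : E →ₗ[ℝ] E)
    (h1 : ∀ x ∈ K, L x ∈ K) (hfix : ∀ x ∈ K, L x = x) :
    L.restrict h1 = LinearMap.id := by
  apply LinearMap.ext; intro x
  apply Subtype.ext
  rw [LinearMap.restrict_coe_apply, LinearMap.id_apply]
  exact hfix x x.2

lemma aux_one_dim_eq_det_smul {V : Type*} [AddCommGroup V] [Module ℝ V] [FiniteDimensional ℝ V]
    (h1 : Module.finrank ℝ V = 1) (T : V →ₗ[ℝ] V) (v : V) :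
    T v = (LinearMap.det T) • v := by
  let b := Module.finBasisOfFinrankEq ℝ V h1
  set c := b.repr (T (b 0)) 0 with hc
  have hTb : T (b 0) = c • b 0 := by
    conv_lhs => rw [← b.sum_repr (T (b 0))]
    rw [Fin.sum_univ_one]
  have hdet : LinearMap.det T = c := by
    rw [← LinearMap.det_toMatrix b, Matrix.det_fin_one, LinearMap.toMatrix_apply]
  have hv : v = b.repr v 0 • b 0 := by
    conv_lhs => rw [← b.sum_repr v]
    rw [Fin.sum_univ_one]
  rw [hdet, hv, map_smul, hTb, smul_smul, smul_smul, mul_comm]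

end Aux2

section Aux4

local notation "E3" => EuclideanSpace ℝ (Fin 3)

lemma aux_finrank_ker_eq_one (L : E3 →ₗ[ℝ] E3) (hdet : LinearMap.det L = 1)
    (hnorm : ∀ x, ‖L x‖ = ‖x‖) (hne : L ≠ LinearMap.id) :
    Module.finrank ℝ (LinearMap.ker (L - LinearMap.id)) = 1 := by
  have hinner : ∀ x y : E3, ⟪L x, L y⟫ = ⟪x, y⟫ :=
    (LinearMap.norm_map_iff_inner_map_map L).1 hnorm
  set K := LinearMap.ker (L - LinearMap.id) with hK
  have hfix : ∀ x ∈ K, L x = x := by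
    intro x hx
    have h0 := LinearMap.mem_ker.1 hx
    rw [LinearMap.sub_apply, LinearMap.id_apply, sub_eq_zero] at h0
    exact h0
  have hKne : K ≠ ⊥ := by
    have h0 : LinearMap.det (L - LinearMap.id) = 0 := aux_det_sub_one_eq_zero L hdet hinner
    exact (LinearMap.bot_lt_ker_of_det_eq_zero h0).ne'
  have hpos : 0 < Module.finrank ℝ K :=
    Module.finrank_pos_iff.mpr (Submodule.nontrivial_iff_ne_bot.mpr hKne)
  have hKnetop : K ≠ ⊤ := by
    intro h
    apply hne
    apply LinearMap.ext; intro x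
    exact hfix x (h ▸ Submodule.mem_top)
  have hle : Module.finrank ℝ K ≤ 3 := by
    have := Submodule.finrank_le K
    rwa [finrank_euclideanSpace_fin] at this
  -- rule out 2 and 3
  interval_cases h : Module.finrank ℝ K
  · rfl
  · -- finrank K = 2
    exfalso
    have horth : Module.finrank ℝ (Kᗮ) = 1 := by
      have := Submodule.finrank_add_finrank_orthogonal K
      rw [finrank_euclideanSpace_fin, h] at this
      omega
    have h1 : ∀ x ∈ K, L x ∈ K := fun x hx => by rw [hfix x hx]; exact hx
    have h2 : ∀ x ∈ Kᗮ, L x ∈ Kᗮ := by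
      intro x hx
      rw [Submodule.mem_orthogonal]
      intro u hu
      have : ⟪L u, L x⟫ = ⟪u, x⟫ := hinner u x
      rw [hfix u hu] at this
      rw [this]
      exact (Submodule.mem_orthogonal K x).1 hx u hu
    have hsplit := aux_det_split K L h1 h2
    rw [aux_restrict_eq_id K L h1 hfix, LinearMap.det_id, one_mul, hdet] at hsplit
    -- the restriction to Kᗮ is identity since det = 1 on a 1-dim space
    set w := (Module.finBasisOfFinrankEq ℝ (↥(Kᗮ)) horth) 0 with hw
    have hwne : w ≠ 0 := Basis.ne_zero _ 0
    have hTw := aux_one_dim_eq_det_smul horth (L.restrict h2) w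
    rw [← hsplit, one_smul] at hTw
    have hwK : (w : E3) ∈ K := by
      have : (L.restrict h2 w : E3) = L (w : E3) := LinearMap.restrict_coe_apply _ _ _
      rw [hTw] at this
      have hfixw : L (w : E3) = (w : E3) := this.symm
      refine LinearMap.mem_ker.2 ?_
      rw [LinearMap.sub_apply, LinearMap.id_apply, hfixw, sub_self]
    have : (w : E3) ∈ K ⊓ Kᗮ := ⟨hwK, w.2⟩
    rw [Submodule.inf_orthogonal_eq_bot] at this
    exact hwne (Subtype.ext this)
  · -- finrank K = 3
    exact absurd (Submodule.eq_top_of_finrank_eq (by rw [h, finrank_euclideanSpace_fin])) hKnetop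

end Aux4

section Aux5

variable {V : Type*} [NormedAddCommGroup V] [InnerProductSpace ℝ V] [FiniteDimensional ℝ V]

lemma aux_comm_two_dim (h2 : Module.finrank ℝ V = 2) (S T : V →ₗ[ℝ] V)
    (hS : ∀ x y : V, ⟪S x, S y⟫ = ⟪x, y⟫) (hT : ∀ x y : V, ⟪T x, T y⟫ = ⟪x, y⟫)
    (hdS : LinearMap.det S = 1) (hdT : LinearMap.det T = 1) :
    S ∘ₗ T = T ∘ₗ S := by
  classical
  let b : OrthonormalBasis (Fin 2) ℝ V :=
    (stdOrthonormalBasis ℝ V).reindex (finCongr (by rw [h2]))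
  have key : ∀ (U : V →ₗ[ℝ] V), (∀ x y : V, ⟪U x, U y⟫ = ⟪x, y⟫) → LinearMap.det U = 1 →
      (LinearMap.toMatrix b.toBasis b.toBasis U) 0 1
          = - (LinearMap.toMatrix b.toBasis b.toBasis U) 1 0 ∧
        (LinearMap.toMatrix b.toBasis b.toBasis U) 1 1
          = (LinearMap.toMatrix b.toBasis b.toBasis U) 0 0 := by
    intro U hU hdU
    set M := LinearMap.toMatrix b.toBasis b.toBasis U with hM
    have hMij : ∀ i j, M i j = ⟪b i, U (b j)⟫ := by
      intro i j
      rw [hM, LinearMap.toMatrix_apply, OrthonormalBasis.coe_toBasis_repr_apply,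
        OrthonormalBasis.repr_apply_apply, OrthonormalBasis.coe_toBasis]
    have horth : ∀ i j, M 0 i * M 0 j + M 1 i * M 1 j = if i = j then (1:ℝ) else 0 := by
      intro i j
      have h := b.sum_inner_mul_inner (U (b i)) (U (b j))
      rw [hU (b i) (b j)] at h
      rw [orthonormal_iff_ite.1 b.orthonormal i j] at h
      rw [Fin.sum_univ_two] at h
      rw [hMij 0 i, hMij 0 j, hMij 1 i, hMij 1 j]
      rw [← h]
      ring_nf
      rw [real_inner_comm (U (b i)) (b 0), real_inner_comm (U (b i)) (b 1)]
      ring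
    have hdet : M 0 0 * M 1 1 - M 0 1 * M 1 0 = 1 := by
      rw [← Matrix.det_fin_two, hM, LinearMap.det_toMatrix, hdU]
    have e00 := horth 0 0
    have e01 := horth 0 1
    norm_num at e00 e01
    constructor
    · linear_combination (M 0 0) * e01 - (M 1 0) * hdet - (M 0 1) * e00
    · linear_combination (M 1 0) * e01 + (M 0 0) * hdet - (M 1 1) * e00
  obtain ⟨hS1, hS2⟩ := key S hS hdS
  obtain ⟨hT1, hT2⟩ := key T hT hdT
  apply (LinearMap.toMatrix b.toBasis b.toBasis).injective
  rw [LinearMap.toMatrix_comp b.toBasis b.toBasis b.toBasis,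
    LinearMap.toMatrix_comp b.toBasis b.toBasis b.toBasis]
  set M := LinearMap.toMatrix b.toBasis b.toBasis S with hMdef
  set N := LinearMap.toMatrix b.toBasis b.toBasis T with hNdef
  rw [Matrix.eta_fin_two M, Matrix.eta_fin_two N, hS1, hS2, hT1, hT2,
    Matrix.mul_fin_two, Matrix.mul_fin_two]
  ext i j
  fin_cases i <;> fin_cases j <;> simp <;> ring

end Aux5

section Aux6

variable {E : Type*} [NormedAddCommGroup E] [InnerProductSpace ℝ E] [FiniteDimensional ℝ E]

omit [FiniteDimensional ℝ E] in
lemma aux_orth_invariant (L : E →ₗ[ℝ] E) (hinner : ∀ x y : E, ⟪L x, L y⟫ = ⟪x, y⟫)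
    (K : Submodule ℝ E) (hfix : ∀ x ∈ K, L x = x) :
    ∀ x ∈ Kᗮ, L x ∈ Kᗮ := by
  intro x hx
  rw [Submodule.mem_orthogonal]
  intro u hu
  have h := hinner u x
  rw [hfix u hu] at h
  rw [h]
  exact (Submodule.mem_orthogonal K x).1 hx u hu

end Aux6

section Aux7

local notation "E3" => EuclideanSpace ℝ (Fin 3)

lemma aux_ker_fix (L : E3 →ₗ[ℝ] E3) (x : E3) :
    x ∈ LinearMap.ker (L - LinearMap.id) ↔ L x = x := by
  rw [LinearMap.mem_ker, LinearMap.sub_apply, LinearMap.id_apply, sub_eq_zero]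

lemma aux_surjective (L : E3 →ₗ[ℝ] E3) (hnorm : ∀ x, ‖L x‖ = ‖x‖) :
    Function.Surjective L := by
  rw [← LinearMap.injective_iff_surjective]
  intro x y hxy
  have : ‖L (x - y)‖ = ‖x - y‖ := hnorm _
  rw [map_sub, hxy, sub_self, norm_zero] at this
  exact sub_eq_zero.1 (norm_eq_zero.1 this.symm)

lemma aux_ker_adjoint_sub_id (L : E3 →ₗ[ℝ] E3) (hnorm : ∀ x, ‖L x‖ = ‖x‖) :
    LinearMap.ker (LinearMap.adjoint L - LinearMap.id) = LinearMap.ker (L - LinearMap.id) := by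
  have hinner : ∀ x y : E3, ⟪L x, L y⟫ = ⟪x, y⟫ :=
    (LinearMap.norm_map_iff_inner_map_map L).1 hnorm
  ext x
  rw [aux_ker_fix, aux_ker_fix]
  exact (aux_fixed_iff_adjoint_fixed L hinner (aux_surjective L hnorm) x).symm

lemma aux_range_sub_id (L : E3 →ₗ[ℝ] E3) (hnorm : ∀ x, ‖L x‖ = ‖x‖) :
    LinearMap.range (L - LinearMap.id) = (LinearMap.ker (L - LinearMap.id))ᗮ := by
  rw [aux_range_eq_orthogonal_ker_adjoint (L - LinearMap.id)]
  congr 1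
  rw [map_sub]
  have : LinearMap.adjoint (LinearMap.id : E3 →ₗ[ℝ] E3) = LinearMap.id := by
    rw [← Module.End.one_eq_id, ← LinearMap.star_eq_adjoint, star_one]
  rw [this]
  exact aux_ker_adjoint_sub_id L hnorm

lemma aux_range_id_sub (L : E3 →ₗ[ℝ] E3) (hnorm : ∀ x, ‖L x‖ = ‖x‖) :
    LinearMap.range (LinearMap.id - L) = (LinearMap.ker (L - LinearMap.id))ᗮ := by
  rw [← aux_range_sub_id L hnorm, ← neg_sub, LinearMap.range_neg]

lemma aux_comm_same_ker (A B : E3 →ₗ[ℝ] E3)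
    (hAnorm : ∀ x, ‖A x‖ = ‖x‖) (hBnorm : ∀ x, ‖B x‖ = ‖x‖)
    (hdA : LinearMap.det A = 1) (hdB : LinearMap.det B = 1)
    (hAne : A ≠ LinearMap.id) (hBne : B ≠ LinearMap.id)
    (hKK : LinearMap.ker (A - LinearMap.id) = LinearMap.ker (B - LinearMap.id)) :
    A ∘ₗ B = B ∘ₗ A := by
  have hAinner : ∀ x y : E3, ⟪A x, A y⟫ = ⟪x, y⟫ :=
    (LinearMap.norm_map_iff_inner_map_map A).1 hAnorm
  have hBinner : ∀ x y : E3, ⟪B x, B y⟫ = ⟪x, y⟫ :=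
    (LinearMap.norm_map_iff_inner_map_map B).1 hBnorm
  set K := LinearMap.ker (A - LinearMap.id) with hKdef
  have hfixA : ∀ x ∈ K, A x = x := fun x hx => (aux_ker_fix A x).1 hx
  have hfixB : ∀ x ∈ K, B x = x := fun x hx => (aux_ker_fix B x).1 (hKK ▸ hx)
  have hrk : Module.finrank ℝ K = 1 := aux_finrank_ker_eq_one A hdA hAnorm hAne
  have hrkO : Module.finrank ℝ (Kᗮ) = 2 := by
    have := Submodule.finrank_add_finrank_orthogonal K
    rw [finrank_euclideanSpace_fin, hrk] at this
    omega
  have hA1 : ∀ x ∈ K, A x ∈ K := fun x hx => by rw [hfixA x hx]; exact hx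
  have hB1 : ∀ x ∈ K, B x ∈ K := fun x hx => by rw [hfixB x hx]; exact hx
  have hA2 : ∀ x ∈ Kᗮ, A x ∈ Kᗮ := aux_orth_invariant A hAinner K hfixA
  have hB2 : ∀ x ∈ Kᗮ, B x ∈ Kᗮ := aux_orth_invariant B hBinner K hfixB
  have hdA' : LinearMap.det (A.restrict hA2) = 1 := by
    have := aux_det_split K A hA1 hA2
    rw [aux_restrict_eq_id K A hA1 hfixA, LinearMap.det_id, one_mul, hdA] at this
    exact this.symm
  have hdB' : LinearMap.det (B.restrict hB2) = 1 := by
    have := aux_det_split K B hB1 hB2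
    rw [aux_restrict_eq_id K B hB1 hfixB, LinearMap.det_id, one_mul, hdB] at this
    exact this.symm
  have hA'inner : ∀ x y : ↥(Kᗮ), ⟪(A.restrict hA2) x, (A.restrict hA2) y⟫ = ⟪x, y⟫ := by
    intro x y
    rw [Submodule.coe_inner, Submodule.coe_inner, LinearMap.restrict_coe_apply,
      LinearMap.restrict_coe_apply]
    exact hAinner x y
  have hB'inner : ∀ x y : ↥(Kᗮ), ⟪(B.restrict hB2) x, (B.restrict hB2) y⟫ = ⟪x, y⟫ := by
    intro x y
    rw [Submodule.coe_inner, Submodule.coe_inner, LinearMap.restrict_coe_apply,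
      LinearMap.restrict_coe_apply]
    exact hBinner x y
  have hcomm' := aux_comm_two_dim hrkO (A.restrict hA2) (B.restrict hB2)
    hA'inner hB'inner hdA' hdB'
  have hc : IsCompl K Kᗮ := Submodule.isCompl_orthogonal_of_hasOrthogonalProjection
  apply LinearMap.ext; intro x
  obtain ⟨p, rfl⟩ := (Submodule.prodEquivOfIsCompl K Kᗮ hc).surjective x
  have hx : (Submodule.prodEquivOfIsCompl K Kᗮ hc) p = (p.1 : E3) + (p.2 : E3) := rfl
  rw [hx]
  simp only [LinearMap.comp_apply, map_add]
  rw [hfixB p.1 p.1.2, hfixA p.1 p.1.2, hfixB p.1 p.1.2]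
  have hBp2 : B (p.2 : E3) = ((B.restrict hB2) p.2 : E3) := rfl
  have hAp2 : A (p.2 : E3) = ((A.restrict hA2) p.2 : E3) := rfl
  rw [hBp2, hAp2]
  have h1 : A ((B.restrict hB2) p.2 : E3) = ((A.restrict hA2) ((B.restrict hB2) p.2) : E3) := rfl
  have h2 : B ((A.restrict hA2) p.2 : E3) = ((B.restrict hB2) ((A.restrict hA2) p.2) : E3) := rfl
  rw [h1, h2]
  have := LinearMap.congr_fun hcomm' p.2
  simp only [LinearMap.comp_apply] at this
  rw [this]

end Aux7

section Aux8

lemma aux_finrank_prod {M N : Type*} [AddCommGroup M] [Module ℝ M] [AddCommGroup N] [Module ℝ N]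
    [FiniteDimensional ℝ M] [FiniteDimensional ℝ N] (p : Submodule ℝ M) (q : Submodule ℝ N) :
    Module.finrank ℝ (p.prod q) = Module.finrank ℝ p + Module.finrank ℝ q := by
  rw [← Module.finrank_prod]
  exact LinearEquiv.finrank_eq
    { toFun := fun x => (⟨x.1.1, x.2.1⟩, ⟨x.1.2, x.2.2⟩),
      invFun := fun y => ⟨(y.1.1, y.2.1), ⟨y.1.2, y.2.2⟩⟩,
      map_add' := fun _ _ => rfl, map_smul' := fun _ _ => rfl,
      left_inv := fun _ => rfl, right_inv := fun _ => rfl }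

lemma aux_eq_of_mem_rank_one {M : Type*} [AddCommGroup M] [Module ℝ M] [FiniteDimensional ℝ M]
    (K1 K2 : Submodule ℝ M) (h1 : Module.finrank ℝ K1 = 1) (h2 : Module.finrank ℝ K2 = 1)
    (x : M) (hx : x ≠ 0) (hx1 : x ∈ K1) (hx2 : x ∈ K2) : K1 = K2 := by
  have hs1 : (Submodule.span ℝ {x}) ≤ K1 := by
    rw [Submodule.span_le, Set.singleton_subset_iff]; exact hx1
  have hs2 : (Submodule.span ℝ {x}) ≤ K2 := by
    rw [Submodule.span_le, Set.singleton_subset_iff]; exact hx2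
  have hr : Module.finrank ℝ (Submodule.span ℝ {x}) = 1 := finrank_span_singleton hx
  have e1 : Submodule.span ℝ {x} = K1 :=
    Submodule.eq_of_le_of_finrank_le hs1 (by rw [h1, hr])
  have e2 : Submodule.span ℝ {x} = K2 :=
    Submodule.eq_of_le_of_finrank_le hs2 (by rw [h2, hr])
  rw [← e1, e2]

end Aux8
local notation "E9" => EuclideanSpace ℝ (Fin 3)

/-- If `f` and `g` are orientation-preserving isometries of Euclidean `ℝ³`
(affine isometric bijections whose linear parts have determinant `1`) whose
fixed point sets are disjoint, then some element `h` of the subgroup generated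
by `f` and `g` has no fixed point. -/
theorem exists_fixed_point_free_element_R3
    (f g : Equiv.Perm (EuclideanSpace ℝ (Fin 3)))
    (hf_iso : ∀ x y : EuclideanSpace ℝ (Fin 3), dist (f x) (f y) = dist x y)
    (hg_iso : ∀ x y : EuclideanSpace ℝ (Fin 3), dist (g x) (g y) = dist x y)
    (hf_aff : ∃ L : EuclideanSpace ℝ (Fin 3) →ₗ[ℝ] EuclideanSpace ℝ (Fin 3),
      LinearMap.det L = 1 ∧ ∀ x, f x = L x + f 0)
    (hg_aff : ∃ L : EuclideanSpace ℝ (Fin 3) →ₗ[ℝ] EuclideanSpace ℝ (Fin 3),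
      LinearMap.det L = 1 ∧ ∀ x, g x = L x + g 0)
    (hdisj : {x : EuclideanSpace ℝ (Fin 3) | f x = x} ∩ {x | g x = x} = ∅) :
    ∃ h ∈ Subgroup.closure ({f, g} : Set (Equiv.Perm (EuclideanSpace ℝ (Fin 3)))),
      ∀ x : EuclideanSpace ℝ (Fin 3), h x ≠ x := by
  classical
  have hfmem : f ∈ Subgroup.closure ({f, g} : Set (Equiv.Perm E9)) :=
    Subgroup.subset_closure (Set.mem_insert _ _)
  have hgmem : g ∈ Subgroup.closure ({f, g} : Set (Equiv.Perm E9)) :=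
    Subgroup.subset_closure (Set.mem_insert_of_mem _ rfl)
  have hdisj' : ∀ x : E9, ¬(f x = x ∧ g x = x) := by
    intro x hx
    have : x ∈ ({x : E9 | f x = x} ∩ {x | g x = x}) := ⟨hx.1, hx.2⟩
    rw [hdisj] at this
    exact this
  by_cases hf0 : ∃ x : E9, f x = x
  swap
  · push_neg at hf0
    exact ⟨f, hfmem, hf0⟩
  by_cases hg0 : ∃ x : E9, g x = x
  swap
  · push_neg at hg0
    exact ⟨g, hgmem, hg0⟩
  obtain ⟨x₀, hx₀⟩ := hf0
  obtain ⟨y₀, hy₀⟩ := hg0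
  obtain ⟨A, hdA, hfA⟩ := hf_aff
  obtain ⟨B, hdB, hgB⟩ := hg_aff
  set a := f 0 with ha_def
  set b := g 0 with hb_def
  -- linear parts preserve norms
  have hAnorm : ∀ x : E9, ‖A x‖ = ‖x‖ := by
    intro x
    have h := hf_iso x 0
    rw [dist_eq_norm, dist_eq_norm, hfA x, sub_zero] at h
    rw [← h, add_sub_cancel_right]
  have hBnorm : ∀ x : E9, ‖B x‖ = ‖x‖ := by
    intro x
    have h := hg_iso x 0
    rw [dist_eq_norm, dist_eq_norm, hgB x, sub_zero] at h
    rw [← h, add_sub_cancel_right]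
  have hAinj : Function.Injective A :=
    (LinearMap.injective_iff_surjective).2 (aux_surjective A hAnorm)
  -- linear parts are not the identity
  have hAne : A ≠ LinearMap.id := by
    intro h
    have ha0 : a = 0 := by
      have := hx₀
      rw [hfA x₀, h, LinearMap.id_apply] at this
      exact (add_eq_left).1 this
    have : f y₀ = y₀ := by rw [hfA y₀, h, LinearMap.id_apply, ha0, add_zero]
    exact hdisj' y₀ ⟨this, hy₀⟩
  have hBne : B ≠ LinearMap.id := by
    intro h
    have hb0 : b = 0 := by
      have := hy₀
      rw [hgB y₀, h, LinearMap.id_apply] at this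
      exact (add_eq_left).1 this
    have : g x₀ = x₀ := by rw [hgB x₀, h, LinearMap.id_apply, hb0, add_zero]
    exact hdisj' x₀ ⟨hx₀, this⟩
  have ha : x₀ - A x₀ = a := by
    have h := hx₀
    rw [hfA x₀] at h
    exact (eq_sub_of_add_eq' h).symm
  have hb : y₀ - B y₀ = b := by
    have h := hy₀
    rw [hgB y₀] at h
    exact (eq_sub_of_add_eq' h).symm
  set K_A := LinearMap.ker (A - LinearMap.id) with hKA_def
  set K_B := LinearMap.ker (B - LinearMap.id) with hKB_def
  have hrkA : Module.finrank ℝ K_A = 1 := aux_finrank_ker_eq_one A hdA hAnorm hAne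
  have hrkB : Module.finrank ℝ K_B = 1 := aux_finrank_ker_eq_one B hdB hBnorm hBne
  by_cases hKK : K_A = K_B
  · -- rotations about parallel axes: use the commutator
    have hcomm : A ∘ₗ B = B ∘ₗ A :=
      aux_comm_same_ker A B hAnorm hBnorm hdA hdB hAne hBne hKK
    have hcomm' : ∀ x : E9, A (B x) = B (A x) := fun x => by
      have := LinearMap.congr_fun hcomm x
      simpa using this
    set c : Equiv.Perm E9 := (f * g) * (g * f)⁻¹ with hc_def
    have hcmem : c ∈ Subgroup.closure ({f, g} : Set (Equiv.Perm E9)) :=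
      mul_mem (mul_mem hfmem hgmem) (inv_mem (mul_mem hgmem hfmem))
    have hc_apply : ∀ x : E9, c x = x + (A b + a - B a - b) := by
      intro x
      set u := (g * f)⁻¹ x with hu_def
      have hu : g (f u) = x := by
        rw [← Equiv.Perm.mul_apply]
        exact Equiv.apply_symm_apply (g * f) x
      have h1 : c x = f (g u) := by
        rw [hc_def, Equiv.Perm.mul_apply, Equiv.Perm.mul_apply, ← hu_def]
      rw [h1, hfA (g u), hgB u]
      conv_lhs => rw [map_add]
      conv_rhs => rw [← hu, hgB (f u), hfA u, map_add]
      rw [hcomm' u]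
      abel
    by_cases ht : A b + a - B a - b = 0
    · -- the commutator is trivial: derive a common fixed point, contradiction
      exfalso
      set z : E9 := x₀ - y₀ with hz_def
      set v : E9 := z - B z with hv_def
      have hvA : A v = v := by
        have hexp : v - A v = (a - B a) - (b - A b) := by
          rw [hv_def, hz_def, ← ha, ← hb]
          simp only [map_sub]
          rw [hcomm' x₀, hcomm' y₀]
          abel
        have : v - A v = 0 := by
          rw [hexp]
          rw [show (a - B a) - (b - A b) = A b + a - B a - b by abel, ht]
        rw [sub_eq_zero] at this
        exact this.symm
      have hvKB : v ∈ K_B := by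
        rw [← hKK, hKA_def, aux_ker_fix]
        exact hvA
      have hvKBO : v ∈ K_Bᗮ := by
        rw [hKB_def, ← aux_range_id_sub B hBnorm]
        exact ⟨z, by rw [LinearMap.sub_apply, LinearMap.id_apply]⟩
      have hv0 : v = 0 := by
        have : v ∈ K_B ⊓ K_Bᗮ := ⟨hvKB, hvKBO⟩
        rwa [Submodule.inf_orthogonal_eq_bot, Submodule.mem_bot] at this
      have hgx₀ : g x₀ = x₀ := by
        have h1 : x₀ - B x₀ = b := by
          have : z - B z = 0 := hv0
          rw [hz_def, map_sub] at this
          have h2 : x₀ - B x₀ = y₀ - B y₀ :=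
            sub_eq_sub_iff_sub_eq_sub.1 (sub_eq_zero.1 this)
          rw [h2, hb]
        rw [hgB x₀, ← h1]
        abel
      exact hdisj' x₀ ⟨hx₀, hgx₀⟩
    · exact ⟨c, hcmem, fun x hx => by
        have := hc_apply x
        rw [hx] at this
        exact ht (left_eq_add.1 this)⟩
  · -- axes are not parallel : f * g works if it is fixed-point free
    by_cases hw : ∃ x : E9, f (g x) = x
    swap
    · push_neg at hw
      exact ⟨f * g, mul_mem hfmem hgmem, fun x => by
        rw [Equiv.Perm.mul_apply]; exact hw x⟩
    exfalso
    obtain ⟨z₀, hz₀⟩ := hw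
    set C := A ∘ₗ B with hC_def
    have hCnorm : ∀ x : E9, ‖C x‖ = ‖x‖ := fun x => by
      rw [hC_def, LinearMap.comp_apply, hAnorm, hBnorm]
    have hdC : LinearMap.det C = 1 := by
      rw [hC_def, LinearMap.det_comp, hdA, hdB, one_mul]
    have hCne : C ≠ LinearMap.id := by
      intro h
      apply hKK
      have hAB : ∀ x : E9, A (B x) = x := fun x => by
        have := LinearMap.congr_fun h x
        simpa [hC_def] using this
      have hBA : ∀ x : E9, B (A x) = x := fun x => by
        apply hAinj
        rw [hAB (A x)]
      ext x
      rw [hKA_def, hKB_def, aux_ker_fix, aux_ker_fix]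
      constructor
      · intro hAx
        calc B x = B (A x) := by rw [hAx]
        _ = x := hBA x
      · intro hBx
        calc A x = A (B x) := by rw [hBx]
        _ = x := hAB x
    set K_C := LinearMap.ker (C - LinearMap.id) with hKC_def
    have hrkC : Module.finrank ℝ K_C = 1 := aux_finrank_ker_eq_one C hdC hCnorm hCne
    have hKCne : K_C ≠ ⊥ := by
      intro h
      rw [h] at hrkC
      simp [finrank_bot] at hrkC
    obtain ⟨n, hnC, hn0⟩ := Submodule.ne_bot_iff _ |>.1 hKCne
    have hnA : n ∉ K_A := by
      intro hnA
      have h1 : A n = n := (aux_ker_fix A n).1 hnA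
      have h2 : A (B n) = n := by
        have := (aux_ker_fix C n).1 hnC
        simpa [hC_def] using this
      have h3 : B n = n := by
        apply hAinj
        rw [h2, h1]
      have h4 : n ∈ K_B := (aux_ker_fix B n).2 h3
      exact hKK (aux_eq_of_mem_rank_one K_A K_B hrkA hrkB n hn0 hnA h4)
    -- the linear functional p ↦ ⟪n, p.1 + A p.2⟫ on E9 × E9
    set M : E9 × E9 →ₗ[ℝ] E9 :=
      (LinearMap.fst ℝ E9 E9) + A ∘ₗ (LinearMap.snd ℝ E9 E9) with hM_def
    set μ : E9 × E9 →ₗ[ℝ] ℝ := ((innerSL ℝ n).toLinearMap) ∘ₗ M with hμ_def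
    have hμ_apply : ∀ p : E9 × E9, μ p = ⟪n, p.1 + A p.2⟫ := by
      intro p
      rw [hμ_def, LinearMap.comp_apply, hM_def]
      simp [innerSL_apply_apply]
    set T : E9 →ₗ[ℝ] E9 × E9 :=
      LinearMap.prod (LinearMap.id - A) (LinearMap.id - B) with hT_def
    set W0 : Submodule ℝ (E9 × E9) := (K_Aᗮ).prod (K_Bᗮ) with hW0_def
    set S : Submodule ℝ (E9 × E9) := W0 ⊓ LinearMap.ker μ with hS_def
    have horthC : ∀ w : E9, w - C w = 0 ∨ True := fun _ => Or.inr trivial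
    have hinnerKC : ∀ v : E9, v ∈ K_Cᗮ → ⟪n, v⟫ = 0 := by
      intro v hv
      exact (Submodule.mem_orthogonal K_C v).1 hv n hnC
    have hrangeT : LinearMap.range T ≤ S := by
      rintro p ⟨x, rfl⟩
      rw [hS_def, Submodule.mem_inf]
      constructor
      · rw [hW0_def, Submodule.mem_prod]
        constructor
        · show (T x).1 ∈ K_Aᗮ
          rw [hKA_def, ← aux_range_id_sub A hAnorm]
          exact ⟨x, rfl⟩
        · show (T x).2 ∈ K_Bᗮ
          rw [hKB_def, ← aux_range_id_sub B hBnorm]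
          exact ⟨x, rfl⟩
      · rw [LinearMap.mem_ker, hμ_apply]
        have h1 : (T x).1 + A ((T x).2) = x - C x := by
          show (x - A x) + A (x - B x) = x - C x
          rw [map_sub, hC_def]
          simp only [LinearMap.comp_apply]
          abel
        rw [h1]
        apply hinnerKC
        rw [hKC_def, ← aux_range_id_sub C hCnorm]
        exact ⟨x, by rw [LinearMap.sub_apply, LinearMap.id_apply]⟩
    have hkerT : LinearMap.ker T = ⊥ := by
      rw [LinearMap.ker_eq_bot']
      intro x hx
      rw [hT_def] at hx
      have h1 : x - A x = 0 ∧ x - B x = 0 := by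
        constructor
        · exact congrArg Prod.fst hx
        · exact congrArg Prod.snd hx
      by_contra hxne
      have hxKA : x ∈ K_A := (aux_ker_fix A x).2 (sub_eq_zero.1 h1.1).symm
      have hxKB : x ∈ K_B := (aux_ker_fix B x).2 (sub_eq_zero.1 h1.2).symm
      exact hKK (aux_eq_of_mem_rank_one K_A K_B hrkA hrkB x hxne hxKA hxKB)
    have hrkRange : Module.finrank ℝ (LinearMap.range T) = 3 := by
      have h := LinearMap.finrank_range_add_finrank_ker T
      rw [hkerT, finrank_bot, finrank_euclideanSpace_fin] at h
      omega
    have hrkAO : Module.finrank ℝ (K_Aᗮ) = 2 := by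
      have := Submodule.finrank_add_finrank_orthogonal K_A
      rw [finrank_euclideanSpace_fin, hrkA] at this
      omega
    have hrkBO : Module.finrank ℝ (K_Bᗮ) = 2 := by
      have := Submodule.finrank_add_finrank_orthogonal K_B
      rw [finrank_euclideanSpace_fin, hrkB] at this
      omega
    have hrkW0 : Module.finrank ℝ W0 = 4 := by
      rw [hW0_def, aux_finrank_prod, hrkAO, hrkBO]
    -- find an element of W0 where μ does not vanish
    have hexu : ∃ u ∈ K_Aᗮ, ⟪u, n⟫ ≠ 0 := by
      by_contra hco
      push_neg at hco
      apply hnA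
      have : n ∈ (K_Aᗮ)ᗮ := by
        rw [Submodule.mem_orthogonal]
        exact hco
      rwa [Submodule.orthogonal_orthogonal] at this
    obtain ⟨u, huA, hun⟩ := hexu
    have hp₀W0 : ((u, 0) : E9 × E9) ∈ W0 := by
      rw [hW0_def, Submodule.mem_prod]
      exact ⟨huA, Submodule.zero_mem _⟩
    have hp₀μ : μ (u, 0) ≠ 0 := by
      rw [hμ_apply]
      simp only [map_zero, add_zero]
      rw [real_inner_comm]
      exact hun
    have hSlt : S < W0 := by
      refine lt_of_le_of_ne inf_le_left (fun h => hp₀μ ?_)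
      have h2 : ((u, 0) : E9 × E9) ∈ S := by rw [h]; exact hp₀W0
      rw [hS_def] at h2
      exact (Submodule.mem_inf.1 h2).2
    have hrkS : Module.finrank ℝ S ≤ 3 := by
      have := Submodule.finrank_lt_finrank_of_lt hSlt
      omega
    have hrangeEq : LinearMap.range T = S :=
      Submodule.eq_of_le_of_finrank_le hrangeT (by rw [hrkRange]; exact hrkS)
    -- our actual translation parts give a point of S
    have haKA : a ∈ K_Aᗮ := by
      rw [hKA_def, ← aux_range_id_sub A hAnorm]
      exact ⟨x₀, by rw [LinearMap.sub_apply, LinearMap.id_apply]; exact ha⟩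
    have hbKB : b ∈ K_Bᗮ := by
      rw [hKB_def, ← aux_range_id_sub B hBnorm]
      exact ⟨y₀, by rw [LinearMap.sub_apply, LinearMap.id_apply]; exact hb⟩
    have habμ : μ (a, b) = 0 := by
      rw [hμ_apply]
      have h1 : f (g z₀) = A (B z₀) + (a + A b) := by
        rw [hgB z₀, hfA (B z₀ + b), map_add]
        abel
      have h2 : a + A b = z₀ - C z₀ := by
        have h0 := hz₀
        rw [h1] at h0
        have h3 := eq_sub_of_add_eq' h0
        rw [h3, hC_def, LinearMap.comp_apply]
      rw [h2]
      apply hinnerKC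
      rw [hKC_def, ← aux_range_id_sub C hCnorm]
      exact ⟨z₀, by rw [LinearMap.sub_apply, LinearMap.id_apply]⟩
    have habS : ((a, b) : E9 × E9) ∈ S := by
      rw [hS_def, Submodule.mem_inf]
      refine ⟨?_, LinearMap.mem_ker.2 habμ⟩
      rw [hW0_def, Submodule.mem_prod]
      exact ⟨haKA, hbKB⟩
    rw [← hrangeEq] at habS
    obtain ⟨x, hx⟩ := habS
    have hx1 : x - A x = a := congrArg Prod.fst hx
    have hx2 : x - B x = b := congrArg Prod.snd hx
    have hfx : f x = x := by
      rw [hfA x, ← hx1]; abel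
    have hgx : g x = x := by
      rw [hgB x, ← hx2]; abel
    exact hdisj' x ⟨hfx, hgx⟩
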